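/- Let F be a field, k ≥ 1, V and P nonsingular k×k matrices over F, Q = P⁻¹, U = V·P, V̂ = (Vᵗ)⁻¹, Û = (Uᵗ)⁻¹. Let δ, ε, δ', ε' ∈ F satisfy δδ' + εε' = 1 and εδ' + δε' = 0. Define the linear maps F(X) = δ V̂ Xᵗ U + ε X P and G(Y) = δ' Û Yᵗ V + ε' Y Q on the space of k×k matrices over F. Then G(F(X)) = X and F(G(Y)) = Y for all k×k matrices X, Y; i.e., F∘G and G∘F are the identity transformation. -/
import Mathlib


open Matrix

/-- With `Q = P⁻¹`, `U = V·P`, `V̂ = (Vᵀ)⁻¹`, `Û = (Uᵀ)⁻¹` and coding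
coefficients satisfying `δδ' + εε' = 1` and `εδ' + δε' = 0`, the linear maps
`F(X) = δ V̂ Xᵀ U + ε X P` and `G(Y) = δ' Û Yᵀ V + ε' Y Q` are mutually inverse. -/
theorem suh_ramchandran_encodings_inverse
    {F : Type*} [Field F] {k : ℕ} (hk : 1 ≤ k)
    (V P : Matrix (Fin k) (Fin k) F)
    (hV : IsUnit V.det) (hP : IsUnit P.det)
    (δ ε δ' ε' : F)
    (h1 : δ * δ' + ε * ε' = 1) (h2 : ε * δ' + δ * ε' = 0) :
    ∀ X Y : Matrix (Fin k) (Fin k) F,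
      (δ' • (((V * P)ᵀ)⁻¹ * (δ • ((Vᵀ)⁻¹ * Xᵀ * (V * P)) + ε • (X * P))ᵀ * V)
          + ε' • ((δ • ((Vᵀ)⁻¹ * Xᵀ * (V * P)) + ε • (X * P)) * P⁻¹) = X)
      ∧ (δ • ((Vᵀ)⁻¹ * (δ' • (((V * P)ᵀ)⁻¹ * Yᵀ * V) + ε' • (Y * P⁻¹))ᵀ * (V * P))
          + ε • ((δ' • (((V * P)ᵀ)⁻¹ * Yᵀ * V) + ε' • (Y * P⁻¹)) * P) = Y) := by
  intro X Y
  have hVt : IsUnit (Vᵀ).det := by simpa [det_transpose] using hV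
  have hPt : IsUnit (Pᵀ).det := by simpa [det_transpose] using hP
  constructor
  · simp only [transpose_add, transpose_smul, transpose_mul, transpose_nonsing_inv,
      transpose_transpose, Matrix.mul_add, Matrix.add_mul, Matrix.mul_smul, Matrix.smul_mul,
      smul_smul, Matrix.mul_inv_rev, Matrix.mul_assoc, hV, hP, hVt, hPt,
      Matrix.nonsing_inv_mul_cancel_left, Matrix.mul_nonsing_inv_cancel_left,
      Matrix.nonsing_inv_mul, Matrix.mul_nonsing_inv, Matrix.mul_one]
    match_scalars
    · linear_combination h1
    · linear_combination h2
  · simp only [transpose_add, transpose_smul, transpose_mul, transpose_nonsing_inv,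
      transpose_transpose, Matrix.mul_add, Matrix.add_mul, Matrix.mul_smul, Matrix.smul_mul,
      smul_smul, Matrix.mul_inv_rev, Matrix.mul_assoc, hV, hP, hVt, hPt,
      Matrix.nonsing_inv_mul_cancel_left, Matrix.mul_nonsing_inv_cancel_left,
      Matrix.nonsing_inv_mul, Matrix.mul_nonsing_inv, Matrix.mul_one]
    match_scalars
    · linear_combination h1
    · linear_combination h2
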